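/- Proposition 3, doubly-robust identification (never-treated comparison): Under the overlap condition and the conditional identification conditions (a), (b), (c) with comparison event C = {G = ∞}, and given 𝒳-measurable integrable outcome functions μ^{s'}_{g} and μ^{s'}_{c} satisfying, almost surely, μ^{s'}_{g}·π_{g,s'} = E[1_{G=g}1_{S_{s'}}·ΔY | 𝒳] and μ^{s'}_{c}·π_{c,s'} = E[1_C 1_{S_{s'}}·ΔY | 𝒳], the doubly-robust estimand identifies the causal difference in ATTs: E[(w₁ − w₂)·(ΔY − μ^{s'}_{g})] − E[(w₃ − w₄)·(ΔY − μ^{s'}_{c})] = CDATT(g,t), where ΔY = Y_t − Y_{g−1} is the observed change in outcomes and the weights are w₁ = 1_{G=g}1_{S_s}/p, w₂ = (1_{G=g}1_{S_{s'}}·π_{g,s}/π_{g,s'}) / E[1_{G=g}1_{S_{s'}}·π_{g,s}/π_{g,s'}], w₃ = (1_C 1_{S_s}·π_{g,s}/π_{c,s}) / E[1_C 1_{S_s}·π_{g,s}/π_{c,s}], and w₄ = (1_C 1_{S_{s'}}·π_{g,s}/π_{c,s'}) / E[1_C 1_{S_{s'}}·π_{g,s}/π_{c,s'}]. -/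

import Mathlib

open MeasureTheory ProbabilityTheory
open scoped Classical

/-- Proposition 3, doubly-robust identification of `CDATT(g,t)` with the
never-treated comparison group `C = {G = ∞}`:
`E[(w₁ − w₂)·(ΔY − μ^{s'}_g)] − E[(w₃ − w₄)·(ΔY − μ^{s'}_c)] = CDATT(g,t)`. -/
private lemma cdatt_ind_one_mul {Ω : Type*} (E : Set Ω) (f : Ω → ℝ) :
    (fun ω => E.indicator (fun _ => (1:ℝ)) ω * f ω) = E.indicator f := by
  funext ω; by_cases h : ω ∈ E <;> simp [h]

private lemma cdatt_mul_ind_one {Ω : Type*} (E : Set Ω) (f : Ω → ℝ) :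
    (fun ω => f ω * E.indicator (fun _ => (1:ℝ)) ω) = E.indicator f := by
  funext ω; by_cases h : ω ∈ E <;> simp [h]

private lemma cdatt_ae_cancel {Ω : Type*} [MeasurableSpace Ω] {μ : Measure Ω}
    {x y c : Ω → ℝ} {ε : ℝ} (hε : 0 < ε) (hc : ∀ᵐ ω ∂μ, ε ≤ c ω)
    (h : (fun ω => x ω * c ω) =ᵐ[μ] fun ω => y ω * c ω) : x =ᵐ[μ] y := by
  filter_upwards [hc, h] with ω hcω hω
  exact mul_right_cancel₀ (ne_of_gt (lt_of_lt_of_le hε hcω)) hω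

private lemma cdatt_integrable_bdd_mul {Ω : Type*} [MeasurableSpace Ω] {μ : Measure Ω}
    {h f : Ω → ℝ} {Cb : ℝ} (hh : AEStronglyMeasurable h μ)
    (hbd : ∀ᵐ ω ∂μ, |h ω| ≤ Cb) (hf : Integrable f μ) :
    Integrable (fun ω => h ω * f ω) μ := by
  refine Integrable.mono' (hf.norm.const_mul Cb) (hh.mul hf.aestronglyMeasurable) ?_
  filter_upwards [hbd] with ω hb
  rw [norm_mul]
  exact mul_le_mul_of_nonneg_right (by simpa using hb) (norm_nonneg _)

private lemma cdatt_pullout {Ω : Type*} {m0 : MeasurableSpace Ω}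
    {μ : Measure Ω} [IsProbabilityMeasure μ] {𝒳 : MeasurableSpace Ω} (h𝒳 : 𝒳 ≤ m0)
    {h f : Ω → ℝ} (hh : StronglyMeasurable[𝒳] h) (hf : Integrable f μ)
    (hhf : Integrable (fun ω => h ω * f ω) μ) :
    ∫ ω, h ω * f ω ∂μ = ∫ ω, h ω * (μ[f|𝒳]) ω ∂μ := by
  have h1 : μ[fun ω => h ω * f ω|𝒳] =ᵐ[μ] fun ω => h ω * (μ[f|𝒳]) ω :=
    condExp_mul_of_stronglyMeasurable_left hh hhf hf
  rw [← integral_condExp h𝒳, integral_congr_ae h1]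

private lemma cdatt_condexp_mul {Ω : Type*} {m0 : MeasurableSpace Ω}
    {μ : Measure Ω} [IsProbabilityMeasure μ] {𝒳 : MeasurableSpace Ω}
    {h f : Ω → ℝ} (hh : StronglyMeasurable[𝒳] h) (hf : Integrable f μ)
    (hhf : Integrable (fun ω => h ω * f ω) μ) :
    μ[fun ω => h ω * f ω|𝒳] =ᵐ[μ] fun ω => h ω * (μ[f|𝒳]) ω :=
  condExp_mul_of_stronglyMeasurable_left hh hhf hf

theorem cdatt_dr_identification_never_treated
    {Ω : Type*} [m0 : MeasurableSpace Ω] (μ : Measure Ω) [IsProbabilityMeasure μ]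
    (T : ℕ) (hT : 1 ≤ T)
    (G : Ω → ℕ∞) (hGmeas : Measurable G)
    (hGrange : ∀ ω, G ω = ⊤ ∨ (1 ≤ G ω ∧ G ω ≤ (T : ℕ∞)))
    (Ss : Set Ω) (hSs : MeasurableSet Ss)
    (Ys Ys' Y : ℕ → ℕ∞ → Ω → ℝ)
    (hY : ∀ τ γ ω, Y τ γ ω = if ω ∈ Ss then Ys τ γ ω else Ys' τ γ ω)
    (hIntYs : ∀ τ γ, Integrable (Ys τ γ) μ)
    (hIntYs' : ∀ τ γ, Integrable (Ys' τ γ) μ)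
    (Yobs : ℕ → Ω → ℝ)
    (hYobs : ∀ τ ω, Yobs τ ω = if G ω ≤ (τ : ℕ∞) then Y τ (G ω) ω else Y τ ⊤ ω)
    (hIntYobs : ∀ τ, Integrable (Yobs τ) μ)
    (g t : ℕ) (hg1 : 1 ≤ g) (hgt : g ≤ t) (htT : t ≤ T)
    -- covariate σ-algebra and comparison event
    (𝒳 : MeasurableSpace Ω) (h𝒳 : 𝒳 ≤ m0)
    (C : Set Ω) (hC : C = {ω | G ω = ⊤})
    -- group-subgroup events
    (Egs Egs' Ecs Ecs' : Set Ω)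
    (hEgs : Egs = {ω | G ω = (g : ℕ∞)} ∩ Ss)
    (hEgs' : Egs' = {ω | G ω = (g : ℕ∞)} ∩ Ssᶜ)
    (hEcs : Ecs = C ∩ Ss) (hEcs' : Ecs' = C ∩ Ssᶜ)
    -- propensity scores: versions of the conditional expectations of indicators
    (πgs πgs' πcs πcs' : Ω → ℝ)
    (hπgs_meas : StronglyMeasurable[𝒳] πgs)
    (hπgs : πgs =ᵐ[μ] μ[Egs.indicator (fun _ => (1 : ℝ)) | 𝒳])
    (hπgs'_meas : StronglyMeasurable[𝒳] πgs')
    (hπgs' : πgs' =ᵐ[μ] μ[Egs'.indicator (fun _ => (1 : ℝ)) | 𝒳])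
    (hπcs_meas : StronglyMeasurable[𝒳] πcs)
    (hπcs : πcs =ᵐ[μ] μ[Ecs.indicator (fun _ => (1 : ℝ)) | 𝒳])
    (hπcs'_meas : StronglyMeasurable[𝒳] πcs')
    (hπcs' : πcs' =ᵐ[μ] μ[Ecs'.indicator (fun _ => (1 : ℝ)) | 𝒳])
    -- overlap (Assumption 9)
    (ε : ℝ) (hε : 0 < ε)
    (p : ℝ) (hp : p = (μ Egs).toReal) (hpε : ε < p)
    (hπgs'_bd : ∀ᵐ ω ∂μ, ε ≤ πgs' ω)
    (hπcs_bd : ∀ᵐ ω ∂μ, ε ≤ πcs ω)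
    (hπcs'_bd : ∀ᵐ ω ∂μ, ε ≤ πcs' ω)
    -- observed change and counterfactual untreated changes
    (ΔY Δs Δs' : Ω → ℝ)
    (hΔY : ΔY = fun ω => Yobs t ω - Yobs (g - 1) ω)
    (hΔs : Δs = fun ω => Ys t ⊤ ω - Ys (g - 1) ⊤ ω)
    (hΔs' : Δs' = fun ω => Ys' t ⊤ ω - Ys' (g - 1) ⊤ ω)
    -- (a) conditional no subgroup selection
    (ha : (fun ω => (μ[Egs.indicator (fun ω' => Ys' t (g : ℕ∞) ω' - Ys' t ⊤ ω') | 𝒳]) ω * πgs' ω)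
        =ᵐ[μ] fun ω => (μ[Egs'.indicator (fun ω' => Ys' t (g : ℕ∞) ω' - Ys' t ⊤ ω') | 𝒳]) ω * πgs ω)
    -- (b) conditional parallel trends within each subgroup
    (hb_s : (fun ω => (μ[Egs.indicator Δs | 𝒳]) ω * πcs ω)
        =ᵐ[μ] fun ω => (μ[Ecs.indicator Δs | 𝒳]) ω * πgs ω)
    (hb_s' : (fun ω => (μ[Egs'.indicator Δs' | 𝒳]) ω * πcs' ω)
        =ᵐ[μ] fun ω => (μ[Ecs'.indicator Δs' | 𝒳]) ω * πgs' ω)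
    -- (c) conditional parallel gaps across subgroups for the s'-counterfactual change
    (hc_g : (fun ω => (μ[Egs.indicator Δs' | 𝒳]) ω * πgs' ω)
        =ᵐ[μ] fun ω => (μ[Egs'.indicator Δs' | 𝒳]) ω * πgs ω)
    (hc_c : (fun ω => (μ[Ecs.indicator Δs' | 𝒳]) ω * πcs' ω)
        =ᵐ[μ] fun ω => (μ[Ecs'.indicator Δs' | 𝒳]) ω * πcs ω)
    -- outcome models (𝒳-measurable, integrable)
    (μg' μc' : Ω → ℝ)
    (hμg'_meas : StronglyMeasurable[𝒳] μg') (hμg'_int : Integrable μg' μ)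
    (hμc'_meas : StronglyMeasurable[𝒳] μc') (hμc'_int : Integrable μc' μ)
    (hμg' : (fun ω => μg' ω * πgs' ω) =ᵐ[μ] μ[Egs'.indicator ΔY | 𝒳])
    (hμc' : (fun ω => μc' ω * πcs' ω) =ᵐ[μ] μ[Ecs'.indicator ΔY | 𝒳])
    -- weights
    (w₁ w₂ w₃ w₄ : Ω → ℝ)
    (hw₁ : w₁ = fun ω => Egs.indicator (fun _ => (1 : ℝ)) ω / p)
    (hw₂ : w₂ = fun ω => (Egs'.indicator (fun _ => (1 : ℝ)) ω * πgs ω / πgs' ω)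
        / ∫ ω', Egs'.indicator (fun _ => (1 : ℝ)) ω' * πgs ω' / πgs' ω' ∂μ)
    (hw₃ : w₃ = fun ω => (Ecs.indicator (fun _ => (1 : ℝ)) ω * πgs ω / πcs ω)
        / ∫ ω', Ecs.indicator (fun _ => (1 : ℝ)) ω' * πgs ω' / πcs ω' ∂μ)
    (hw₄ : w₄ = fun ω => (Ecs'.indicator (fun _ => (1 : ℝ)) ω * πgs ω / πcs' ω)
        / ∫ ω', Ecs'.indicator (fun _ => (1 : ℝ)) ω' * πgs ω' / πcs' ω' ∂μ) :
    -- doubly-robust estimand = CDATT(g,t)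
    (∫ ω, (w₁ ω - w₂ ω) * (ΔY ω - μg' ω) ∂μ)
      - (∫ ω, (w₃ ω - w₄ ω) * (ΔY ω - μc' ω) ∂μ)
    = (∫ ω, (Ys t (g : ℕ∞) ω - Ys t ⊤ ω) ∂(μ[|Egs]))
      - (∫ ω, (Ys' t (g : ℕ∞) ω - Ys' t ⊤ ω) ∂(μ[|Egs])) := by
  classical
  letI : MeasurableSpace Ω := m0
  have hp0 : 0 < p := lt_trans hε hpε
  -- measurability of events
  have hmG : MeasurableSet[m0] {ω | G ω = (g : ℕ∞)} := hGmeas (measurableSet_singleton _)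
  have hmC : MeasurableSet[m0] C := by rw [hC]; exact hGmeas (measurableSet_singleton _)
  have hmEgs : MeasurableSet[m0] Egs := by rw [hEgs]; exact hmG.inter hSs
  have hmEgs' : MeasurableSet[m0] Egs' := by rw [hEgs']; exact hmG.inter hSs.compl
  have hmEcs : MeasurableSet[m0] Ecs := by rw [hEcs]; exact hmC.inter hSs
  have hmEcs' : MeasurableSet[m0] Ecs' := by rw [hEcs']; exact hmC.inter hSs.compl
  -- integrabilities
  have hΔYint : Integrable ΔY μ := by rw [hΔY]; exact (hIntYobs t).sub (hIntYobs (g-1))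
  have hΔsint : Integrable Δs μ := by rw [hΔs]; exact (hIntYs t ⊤).sub (hIntYs (g-1) ⊤)
  have hΔs'int : Integrable Δs' μ := by rw [hΔs']; exact (hIntYs' t ⊤).sub (hIntYs' (g-1) ⊤)
  have hAint : Integrable (fun ω => Ys' t (g:ℕ∞) ω - Ys' t ⊤ ω) μ := (hIntYs' t g).sub (hIntYs' t ⊤)
  have hBint : Integrable (fun ω => Ys t (g:ℕ∞) ω - Ys t ⊤ ω) μ := (hIntYs t g).sub (hIntYs t ⊤)
  have hind1 : ∀ (E : Set Ω), MeasurableSet[m0] E → Integrable (E.indicator (fun _ => (1:ℝ))) μ :=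
    fun E hE => (integrable_const 1).indicator hE
  -- propensity bounds
  have hbnd : ∀ (E : Set Ω), MeasurableSet[m0] E → ∀ (π : Ω → ℝ),
      π =ᵐ[μ] μ[E.indicator (fun _ => (1:ℝ))|𝒳] → ∀ᵐ ω ∂μ, 0 ≤ π ω ∧ π ω ≤ 1 := by
    intro E hE π hπ
    have h0 : (0:Ω→ℝ) ≤ᵐ[μ] μ[E.indicator (fun _ => (1:ℝ))|𝒳] :=
      condExp_nonneg (Filter.Eventually.of_forall fun ω =>
        Set.indicator_nonneg (fun _ _ => zero_le_one) ω)
    have h1 : μ[E.indicator (fun _ => (1:ℝ))|𝒳] ≤ᵐ[μ] μ[(fun _ => (1:ℝ))|𝒳] :=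
      condExp_mono (hind1 E hE) (integrable_const 1)
        (Filter.Eventually.of_forall fun ω => by
          by_cases hω : ω ∈ E <;> simp [hω])
    have hc1 : μ[(fun _ : Ω => (1:ℝ))|𝒳] = fun _ => (1:ℝ) := condExp_const h𝒳 1
    rw [hc1] at h1
    filter_upwards [hπ, h0, h1] with ω e1 e2 e3
    exact ⟨by rw [e1]; exact e2, by rw [e1]; exact e3⟩
  have hπgs_01 := hbnd Egs hmEgs πgs hπgs
  -- bounded ratios
  have hbdgen : ∀ (π' : Ω → ℝ), (∀ᵐ ω ∂μ, ε ≤ π' ω) → ∀ᵐ ω ∂μ, |πgs ω / π' ω| ≤ ε⁻¹ := by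
    intro π' hb
    filter_upwards [hπgs_01, hb] with ω h1 h2
    have h2' : 0 < π' ω := lt_of_lt_of_le hε h2
    rw [abs_div, abs_of_nonneg h1.1, abs_of_nonneg (le_of_lt h2')]
    have h := div_le_div₀ zero_le_one h1.2 hε h2
    rwa [one_div] at h
  -- casts
  have hgle : (g:ℕ∞) ≤ (t:ℕ∞) := by exact_mod_cast hgt
  have hgnle : ¬ ((g:ℕ∞) ≤ ((g-1 : ℕ):ℕ∞)) := by
    have h : ¬ (g ≤ g - 1) := by omega
    exact_mod_cast h
  have htopn : ∀ τ : ℕ, ¬ ((⊤:ℕ∞) ≤ (τ:ℕ∞)) := fun τ => by simp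
  -- observed-outcome decompositions
  have hO1 : Egs.indicator ΔY = fun ω =>
      Egs.indicator (fun ω' => Ys t (g:ℕ∞) ω' - Ys t ⊤ ω') ω + Egs.indicator Δs ω := by
    funext ω
    by_cases hω : ω ∈ Egs
    · have hω' := hω
      rw [hEgs] at hω'
      obtain ⟨hG, hS⟩ := hω'
      have hGω : G ω = (g:ℕ∞) := hG
      rw [Set.indicator_of_mem hω, Set.indicator_of_mem hω, Set.indicator_of_mem hω]
      have h1 : ΔY ω = Ys t (g:ℕ∞) ω - Ys (g-1) ⊤ ω := by
        simp only [hΔY]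
        rw [hYobs t ω, hYobs (g-1) ω, hGω, if_pos hgle, if_neg hgnle, hY, hY,
          if_pos hS, if_pos hS]
      have h2 : Δs ω = Ys t ⊤ ω - Ys (g-1) ⊤ ω := by simp only [hΔs]
      rw [h1, h2]; ring
    · simp [Set.indicator_of_notMem hω]
  have hO2 : Egs'.indicator ΔY = fun ω =>
      Egs'.indicator (fun ω' => Ys' t (g:ℕ∞) ω' - Ys' t ⊤ ω') ω + Egs'.indicator Δs' ω := by
    funext ω
    by_cases hω : ω ∈ Egs'
    · have hω' := hω
      rw [hEgs'] at hω'
      obtain ⟨hG, hS⟩ := hω'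
      have hGω : G ω = (g:ℕ∞) := hG
      have hS' : ω ∉ Ss := hS
      rw [Set.indicator_of_mem hω, Set.indicator_of_mem hω, Set.indicator_of_mem hω]
      have h1 : ΔY ω = Ys' t (g:ℕ∞) ω - Ys' (g-1) ⊤ ω := by
        simp only [hΔY]
        rw [hYobs t ω, hYobs (g-1) ω, hGω, if_pos hgle, if_neg hgnle, hY, hY,
          if_neg hS', if_neg hS']
      have h2 : Δs' ω = Ys' t ⊤ ω - Ys' (g-1) ⊤ ω := by simp only [hΔs']
      rw [h1, h2]; ring
    · simp [Set.indicator_of_notMem hω]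
  have hO3 : Ecs.indicator ΔY = Ecs.indicator Δs := by
    funext ω
    by_cases hω : ω ∈ Ecs
    · have hω' := hω
      rw [hEcs] at hω'
      obtain ⟨hGC, hS⟩ := hω'
      rw [hC] at hGC
      have hGω : G ω = ⊤ := hGC
      rw [Set.indicator_of_mem hω, Set.indicator_of_mem hω]
      simp only [hΔY, hΔs]
      rw [hYobs t ω, hYobs (g-1) ω, hGω, if_neg (htopn t), if_neg (htopn (g-1)), hY, hY,
        if_pos hS, if_pos hS]
    · simp [Set.indicator_of_notMem hω]
  have hO4 : Ecs'.indicator ΔY = Ecs'.indicator Δs' := by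
    funext ω
    by_cases hω : ω ∈ Ecs'
    · have hω' := hω
      rw [hEcs'] at hω'
      obtain ⟨hGC, hS⟩ := hω'
      rw [hC] at hGC
      have hGω : G ω = ⊤ := hGC
      have hS' : ω ∉ Ss := hS
      rw [Set.indicator_of_mem hω, Set.indicator_of_mem hω]
      simp only [hΔY, hΔs']
      rw [hYobs t ω, hYobs (g-1) ω, hGω, if_neg (htopn t), if_neg (htopn (g-1)), hY, hY,
        if_neg hS', if_neg hS']
    · simp [Set.indicator_of_notMem hω]
  -- adapted outcome-model identities
  have hμc'Δ : (fun ω => μc' ω * πcs' ω) =ᵐ[μ] μ[Ecs'.indicator Δs'|𝒳] := by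
    rw [← hO4]; exact hμc'
  -- condexp sum decomposition on Egs'
  have hsum2 : μ[Egs'.indicator ΔY|𝒳] =ᵐ[μ]
      fun ω => (μ[Egs'.indicator (fun ω' => Ys' t (g:ℕ∞) ω' - Ys' t ⊤ ω')|𝒳]) ω
        + (μ[Egs'.indicator Δs'|𝒳]) ω := by
    rw [hO2]
    exact condExp_add (hAint.indicator hmEgs') (hΔs'int.indicator hmEgs') _
  -- (J1) : E[1_{Egs'}Δs'|𝒳] = μc'·πgs'
  have hJ1 : μ[Egs'.indicator Δs'|𝒳] =ᵐ[μ] fun ω => μc' ω * πgs' ω := by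
    refine cdatt_ae_cancel hε hπcs'_bd ?_
    filter_upwards [hb_s', hμc'Δ] with ω h1 h2
    linear_combination h1 - πgs' ω * h2
  -- (J2) : E[1_{Egs}Δs'|𝒳] = μc'·πgs
  have hJ2 : μ[Egs.indicator Δs'|𝒳] =ᵐ[μ] fun ω => μc' ω * πgs ω := by
    refine cdatt_ae_cancel hε hπgs'_bd ?_
    filter_upwards [hc_g, hJ1] with ω h1 h2
    linear_combination h1 + πgs ω * h2
  -- (J5) : μg'·πgs = E[1_{Egs}A|𝒳] + E[1_{Egs}Δs'|𝒳]
  have hJ5 : (fun ω => μg' ω * πgs ω) =ᵐ[μ]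
      fun ω => (μ[Egs.indicator (fun ω' => Ys' t (g:ℕ∞) ω' - Ys' t ⊤ ω')|𝒳]) ω
        + (μ[Egs.indicator Δs'|𝒳]) ω := by
    refine cdatt_ae_cancel hε hπgs'_bd ?_
    filter_upwards [hμg', hsum2, ha, hc_g] with ω h1 h2 h3 h4
    linear_combination πgs ω * h1 + πgs ω * h2 - h3 - h4
  -- auxiliary integrabilities
  have hintμg'ind : Integrable (fun ω => μg' ω * Egs'.indicator (fun _ => (1:ℝ)) ω) μ := by
    rw [cdatt_mul_ind_one]; exact hμg'_int.indicator hmEgs'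
  have hintμc'ind : Integrable (fun ω => μc' ω * Ecs'.indicator (fun _ => (1:ℝ)) ω) μ := by
    rw [cdatt_mul_ind_one]; exact hμc'_int.indicator hmEcs'
  have hintμc'indc : Integrable (fun ω => μc' ω * Ecs.indicator (fun _ => (1:ℝ)) ω) μ := by
    rw [cdatt_mul_ind_one]; exact hμc'_int.indicator hmEcs
  have hintμgsind : Integrable (fun ω => μg' ω * Egs.indicator (fun _ => (1:ℝ)) ω) μ := by
    rw [cdatt_mul_ind_one]; exact hμg'_int.indicator hmEgs
  have hint_f2 : Integrable (Egs'.indicator (fun ω => ΔY ω - μg' ω)) μ :=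
    (hΔYint.sub hμg'_int).indicator hmEgs'
  have hint_f3 : Integrable (Ecs.indicator (fun ω => ΔY ω - μc' ω)) μ :=
    (hΔYint.sub hμc'_int).indicator hmEcs
  have hint_f4 : Integrable (Ecs'.indicator (fun ω => ΔY ω - μc' ω)) μ :=
    (hΔYint.sub hμc'_int).indicator hmEcs'
  have hsm2 : StronglyMeasurable[𝒳] (fun ω => πgs ω / πgs' ω) :=
    (hπgs_meas.measurable.div hπgs'_meas.measurable).stronglyMeasurable
  have hsm3 : StronglyMeasurable[𝒳] (fun ω => πgs ω / πcs ω) :=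
    (hπgs_meas.measurable.div hπcs_meas.measurable).stronglyMeasurable
  have hsm4 : StronglyMeasurable[𝒳] (fun ω => πgs ω / πcs' ω) :=
    (hπgs_meas.measurable.div hπcs'_meas.measurable).stronglyMeasurable
  have haesm2 : AEStronglyMeasurable (fun ω => πgs ω / πgs' ω) μ :=
    (hsm2.mono h𝒳).aestronglyMeasurable
  have haesm3 : AEStronglyMeasurable (fun ω => πgs ω / πcs ω) μ :=
    (hsm3.mono h𝒳).aestronglyMeasurable
  have haesm4 : AEStronglyMeasurable (fun ω => πgs ω / πcs' ω) μ :=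
    (hsm4.mono h𝒳).aestronglyMeasurable
  have hint_h2f2 : Integrable
      (fun ω => πgs ω / πgs' ω * (Egs'.indicator (fun ω' => ΔY ω' - μg' ω') ω)) μ :=
    cdatt_integrable_bdd_mul haesm2 (hbdgen πgs' hπgs'_bd) hint_f2
  have hint_h3f3 : Integrable
      (fun ω => πgs ω / πcs ω * (Ecs.indicator (fun ω' => ΔY ω' - μc' ω') ω)) μ :=
    cdatt_integrable_bdd_mul haesm3 (hbdgen πcs hπcs_bd) hint_f3
  have hint_h4f4 : Integrable
      (fun ω => πgs ω / πcs' ω * (Ecs'.indicator (fun ω' => ΔY ω' - μc' ω') ω)) μ :=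
    cdatt_integrable_bdd_mul haesm4 (hbdgen πcs' hπcs'_bd) hint_f4
  have hintμc'πgs : Integrable (fun ω => μc' ω * πgs ω) μ := by
    refine Integrable.mono' hμc'_int.norm
      ((hμc'_meas.mono h𝒳).aestronglyMeasurable.mul (hπgs_meas.mono h𝒳).aestronglyMeasurable) ?_
    filter_upwards [hπgs_01] with ω hb
    rw [norm_mul]
    calc ‖μc' ω‖ * ‖πgs ω‖ ≤ ‖μc' ω‖ * 1 := by
          refine mul_le_mul_of_nonneg_left ?_ (norm_nonneg _)
          rw [Real.norm_eq_abs, abs_of_nonneg hb.1]; exact hb.2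
      _ = ‖μc' ω‖ := mul_one _
  -- kernel identities
  have hker2 : μ[Egs'.indicator (fun ω => ΔY ω - μg' ω)|𝒳] =ᵐ[μ] 0 := by
    have hsplit : Egs'.indicator (fun ω => ΔY ω - μg' ω)
        = fun ω => Egs'.indicator ΔY ω - μg' ω * Egs'.indicator (fun _ => (1:ℝ)) ω := by
      funext ω; by_cases hω : ω ∈ Egs' <;> simp [hω]
    rw [hsplit]
    have h1 : μ[fun ω => Egs'.indicator ΔY ω - μg' ω * Egs'.indicator (fun _ => (1:ℝ)) ω|𝒳]
        =ᵐ[μ] μ[Egs'.indicator ΔY|𝒳] - μ[fun ω => μg' ω * Egs'.indicator (fun _ => (1:ℝ)) ω|𝒳] :=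
      condExp_sub (hΔYint.indicator hmEgs') hintμg'ind _
    have h2 : μ[fun ω => μg' ω * Egs'.indicator (fun _ => (1:ℝ)) ω|𝒳]
        =ᵐ[μ] fun ω => μg' ω * (μ[Egs'.indicator (fun _ => (1:ℝ))|𝒳]) ω :=
      cdatt_condexp_mul hμg'_meas (hind1 _ hmEgs') hintμg'ind
    filter_upwards [h1, h2, hμg', hπgs'] with ω e1 e2 e3 e4
    rw [e1]
    simp only [Pi.sub_apply, Pi.zero_apply]
    rw [e2, ← e4, ← e3]
    ring
  have hker4 : μ[Ecs'.indicator (fun ω => ΔY ω - μc' ω)|𝒳] =ᵐ[μ] 0 := by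
    have hsplit : Ecs'.indicator (fun ω => ΔY ω - μc' ω)
        = fun ω => Ecs'.indicator ΔY ω - μc' ω * Ecs'.indicator (fun _ => (1:ℝ)) ω := by
      funext ω; by_cases hω : ω ∈ Ecs' <;> simp [hω]
    rw [hsplit]
    have h1 : μ[fun ω => Ecs'.indicator ΔY ω - μc' ω * Ecs'.indicator (fun _ => (1:ℝ)) ω|𝒳]
        =ᵐ[μ] μ[Ecs'.indicator ΔY|𝒳] - μ[fun ω => μc' ω * Ecs'.indicator (fun _ => (1:ℝ)) ω|𝒳] :=
      condExp_sub (hΔYint.indicator hmEcs') hintμc'ind _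
    have h2 : μ[fun ω => μc' ω * Ecs'.indicator (fun _ => (1:ℝ)) ω|𝒳]
        =ᵐ[μ] fun ω => μc' ω * (μ[Ecs'.indicator (fun _ => (1:ℝ))|𝒳]) ω :=
      cdatt_condexp_mul hμc'_meas (hind1 _ hmEcs') hintμc'ind
    filter_upwards [h1, h2, hμc', hπcs'] with ω e1 e2 e3 e4
    rw [e1]
    simp only [Pi.sub_apply, Pi.zero_apply]
    rw [e2, ← e4, ← e3]
    ring
  have hker3 : μ[Ecs.indicator (fun ω => ΔY ω - μc' ω)|𝒳] =ᵐ[μ]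
      fun ω => (μ[Ecs.indicator Δs|𝒳]) ω - μc' ω * πcs ω := by
    have hsplit : Ecs.indicator (fun ω => ΔY ω - μc' ω)
        = fun ω => Ecs.indicator ΔY ω - μc' ω * Ecs.indicator (fun _ => (1:ℝ)) ω := by
      funext ω; by_cases hω : ω ∈ Ecs <;> simp [hω]
    rw [hsplit]
    have h1 : μ[fun ω => Ecs.indicator ΔY ω - μc' ω * Ecs.indicator (fun _ => (1:ℝ)) ω|𝒳]
        =ᵐ[μ] μ[Ecs.indicator ΔY|𝒳] - μ[fun ω => μc' ω * Ecs.indicator (fun _ => (1:ℝ)) ω|𝒳] :=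
      condExp_sub (hΔYint.indicator hmEcs) hintμc'indc _
    have h2 : μ[fun ω => μc' ω * Ecs.indicator (fun _ => (1:ℝ)) ω|𝒳]
        =ᵐ[μ] fun ω => μc' ω * (μ[Ecs.indicator (fun _ => (1:ℝ))|𝒳]) ω :=
      cdatt_condexp_mul hμc'_meas (hind1 _ hmEcs) hintμc'indc
    filter_upwards [h1, h2, hπcs] with ω e1 e2 e4
    rw [e1]
    simp only [Pi.sub_apply]
    rw [e2, ← e4, hO3]
  -- outcome-model integral identities
  have hE1 : ∫ ω, Egs.indicator μg' ω ∂μ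
      = (∫ ω, Egs.indicator (fun ω' => Ys' t (g:ℕ∞) ω' - Ys' t ⊤ ω') ω ∂μ)
        + ∫ ω, Egs.indicator Δs' ω ∂μ := by
    simp only [← cdatt_mul_ind_one Egs μg']
    rw [cdatt_pullout h𝒳 hμg'_meas (hind1 _ hmEgs) hintμgsind]
    have e2 : (fun ω => μg' ω * (μ[Egs.indicator (fun _ => (1:ℝ))|𝒳]) ω) =ᵐ[μ]
        fun ω => (μ[Egs.indicator (fun ω' => Ys' t (g:ℕ∞) ω' - Ys' t ⊤ ω')|𝒳]) ω
          + (μ[Egs.indicator Δs'|𝒳]) ω := by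
      filter_upwards [hπgs, hJ5] with ω e e'
      rw [← e]
      exact e'
    rw [integral_congr_ae e2, integral_add integrable_condExp integrable_condExp,
      integral_condExp h𝒳, integral_condExp h𝒳]
  have hE2 : ∫ ω, μc' ω * πgs ω ∂μ = ∫ ω, Egs.indicator Δs' ω ∂μ := by
    rw [← integral_congr_ae hJ2, integral_condExp h𝒳]
  have hD3 : (∫ ω', Ecs.indicator (fun _ => (1:ℝ)) ω' * πgs ω' / πcs ω' ∂μ) = p := by
    rw [show (∫ ω', Ecs.indicator (fun _ => (1:ℝ)) ω' * πgs ω' / πcs ω' ∂μ)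
        = ∫ ω, πgs ω / πcs ω * Ecs.indicator (fun _ => (1:ℝ)) ω ∂μ from
      integral_congr_ae (Filter.Eventually.of_forall fun ω => by ring)]
    rw [cdatt_pullout h𝒳 hsm3 (hind1 _ hmEcs)
      (cdatt_integrable_bdd_mul haesm3 (hbdgen πcs hπcs_bd) (hind1 _ hmEcs))]
    have e : (fun ω => πgs ω / πcs ω * (μ[Ecs.indicator (fun _ => (1:ℝ))|𝒳]) ω) =ᵐ[μ] πgs := by
      filter_upwards [hπcs, hπcs_bd] with ω e1 e2
      have hne : πcs ω ≠ 0 := ne_of_gt (lt_of_lt_of_le hε e2)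
      rw [← e1, div_mul_cancel₀ _ hne]
    rw [integral_congr_ae e, integral_congr_ae hπgs, integral_condExp h𝒳,
      integral_indicator_const (1:ℝ) hmEgs, smul_eq_mul, mul_one, hp, measureReal_def]
  -- pointwise weight rewrites
  have hpt1 : ∀ ω, w₁ ω * (ΔY ω - μg' ω)
      = p⁻¹ * (Egs.indicator (fun ω' => ΔY ω' - μg' ω') ω) := by
    intro ω; simp only [hw₁]
    by_cases hω : ω ∈ Egs
    · simp only [Set.indicator_of_mem hω]; ring
    · simp only [Set.indicator_of_notMem hω]; ring
  have hpt2 : ∀ ω, w₂ ω * (ΔY ω - μg' ω)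
      = (∫ ω', Egs'.indicator (fun _ => (1:ℝ)) ω' * πgs ω' / πgs' ω' ∂μ)⁻¹
        * (πgs ω / πgs' ω * (Egs'.indicator (fun ω' => ΔY ω' - μg' ω') ω)) := by
    intro ω; simp only [hw₂]
    by_cases hω : ω ∈ Egs'
    · simp only [Set.indicator_of_mem hω]; ring
    · simp only [Set.indicator_of_notMem hω]; ring
  have hpt3 : ∀ ω, w₃ ω * (ΔY ω - μc' ω)
      = (∫ ω', Ecs.indicator (fun _ => (1:ℝ)) ω' * πgs ω' / πcs ω' ∂μ)⁻¹
        * (πgs ω / πcs ω * (Ecs.indicator (fun ω' => ΔY ω' - μc' ω') ω)) := by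
    intro ω; simp only [hw₃]
    by_cases hω : ω ∈ Ecs
    · simp only [Set.indicator_of_mem hω]; ring
    · simp only [Set.indicator_of_notMem hω]; ring
  have hpt4 : ∀ ω, w₄ ω * (ΔY ω - μc' ω)
      = (∫ ω', Ecs'.indicator (fun _ => (1:ℝ)) ω' * πgs ω' / πcs' ω' ∂μ)⁻¹
        * (πgs ω / πcs' ω * (Ecs'.indicator (fun ω' => ΔY ω' - μc' ω') ω)) := by
    intro ω; simp only [hw₄]
    by_cases hω : ω ∈ Ecs'
    · simp only [Set.indicator_of_mem hω]; ring
    · simp only [Set.indicator_of_notMem hω]; ring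
  -- the four integral terms
  have hT2 : ∫ ω, w₂ ω * (ΔY ω - μg' ω) ∂μ = 0 := by
    simp only [hpt2]
    rw [integral_const_mul]
    have h0 : ∫ ω, πgs ω / πgs' ω * (Egs'.indicator (fun ω' => ΔY ω' - μg' ω') ω) ∂μ = 0 := by
      rw [cdatt_pullout h𝒳 hsm2 hint_f2 hint_h2f2]
      refine integral_eq_zero_of_ae ?_
      filter_upwards [hker2] with ω e
      simp only [Pi.zero_apply] at e ⊢
      rw [e, mul_zero]
    rw [h0, mul_zero]
  have hT4 : ∫ ω, w₄ ω * (ΔY ω - μc' ω) ∂μ = 0 := by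
    simp only [hpt4]
    rw [integral_const_mul]
    have h0 : ∫ ω, πgs ω / πcs' ω * (Ecs'.indicator (fun ω' => ΔY ω' - μc' ω') ω) ∂μ = 0 := by
      rw [cdatt_pullout h𝒳 hsm4 hint_f4 hint_h4f4]
      refine integral_eq_zero_of_ae ?_
      filter_upwards [hker4] with ω e
      simp only [Pi.zero_apply] at e ⊢
      rw [e, mul_zero]
    rw [h0, mul_zero]
  have hT3 : ∫ ω, w₃ ω * (ΔY ω - μc' ω) ∂μ
      = p⁻¹ * ((∫ ω, Egs.indicator Δs ω ∂μ) - ∫ ω, Egs.indicator Δs' ω ∂μ) := by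
    simp only [hpt3]
    rw [integral_const_mul, hD3]
    congr 1
    rw [cdatt_pullout h𝒳 hsm3 hint_f3 hint_h3f3]
    have e : (fun ω => πgs ω / πcs ω * (μ[Ecs.indicator (fun ω' => ΔY ω' - μc' ω')|𝒳]) ω)
        =ᵐ[μ] fun ω => (μ[Egs.indicator Δs|𝒳]) ω - μc' ω * πgs ω := by
      filter_upwards [hker3, hb_s, hπcs_bd] with ω e1 e2 e3
      have hne : πcs ω ≠ 0 := ne_of_gt (lt_of_lt_of_le hε e3)
      rw [e1]
      field_simp
      linear_combination -e2
    rw [integral_congr_ae e, integral_sub integrable_condExp hintμc'πgs,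
      integral_condExp h𝒳, hE2]
  have hT1 : ∫ ω, w₁ ω * (ΔY ω - μg' ω) ∂μ
      = p⁻¹ * (((∫ ω, Egs.indicator (fun ω' => Ys t (g:ℕ∞) ω' - Ys t ⊤ ω') ω ∂μ)
          + ∫ ω, Egs.indicator Δs ω ∂μ)
        - ((∫ ω, Egs.indicator (fun ω' => Ys' t (g:ℕ∞) ω' - Ys' t ⊤ ω') ω ∂μ)
          + ∫ ω, Egs.indicator Δs' ω ∂μ)) := by
    simp only [hpt1]
    rw [integral_const_mul]
    congr 1
    have hsplit : Egs.indicator (fun ω => ΔY ω - μg' ω)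
        = fun ω => Egs.indicator ΔY ω - Egs.indicator μg' ω := by
      funext ω; by_cases hω : ω ∈ Egs <;> simp [hω]
    simp only [hsplit]
    rw [integral_sub (hΔYint.indicator hmEgs) (hμg'_int.indicator hmEgs)]
    simp only [hO1]
    rw [integral_add (hBint.indicator hmEgs) (hΔsint.indicator hmEgs), hE1]
  -- integrability of the four weighted terms
  have hint_w1 : Integrable (fun ω => w₁ ω * (ΔY ω - μg' ω)) μ := by
    have h : (fun ω => w₁ ω * (ΔY ω - μg' ω))
        = fun ω => p⁻¹ * (Egs.indicator (fun ω' => ΔY ω' - μg' ω') ω) := funext hpt1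
    rw [h]; exact (((hΔYint.sub hμg'_int).indicator hmEgs).const_mul _)
  have hint_w2 : Integrable (fun ω => w₂ ω * (ΔY ω - μg' ω)) μ := by
    have h : (fun ω => w₂ ω * (ΔY ω - μg' ω))
        = fun ω => (∫ ω', Egs'.indicator (fun _ => (1:ℝ)) ω' * πgs ω' / πgs' ω' ∂μ)⁻¹
          * (πgs ω / πgs' ω * (Egs'.indicator (fun ω' => ΔY ω' - μg' ω') ω)) := funext hpt2
    rw [h]; exact hint_h2f2.const_mul _
  have hint_w3 : Integrable (fun ω => w₃ ω * (ΔY ω - μc' ω)) μ := by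
    have h : (fun ω => w₃ ω * (ΔY ω - μc' ω))
        = fun ω => (∫ ω', Ecs.indicator (fun _ => (1:ℝ)) ω' * πgs ω' / πcs ω' ∂μ)⁻¹
          * (πgs ω / πcs ω * (Ecs.indicator (fun ω' => ΔY ω' - μc' ω') ω)) := funext hpt3
    rw [h]; exact hint_h3f3.const_mul _
  have hint_w4 : Integrable (fun ω => w₄ ω * (ΔY ω - μc' ω)) μ := by
    have h : (fun ω => w₄ ω * (ΔY ω - μc' ω))
        = fun ω => (∫ ω', Ecs'.indicator (fun _ => (1:ℝ)) ω' * πgs ω' / πcs' ω' ∂μ)⁻¹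
          * (πgs ω / πcs' ω * (Ecs'.indicator (fun ω' => ΔY ω' - μc' ω') ω)) := funext hpt4
    rw [h]; exact hint_h4f4.const_mul _
  -- split the two differences
  have hsub1 : ∫ ω, (w₁ ω - w₂ ω) * (ΔY ω - μg' ω) ∂μ
      = (∫ ω, w₁ ω * (ΔY ω - μg' ω) ∂μ) - ∫ ω, w₂ ω * (ΔY ω - μg' ω) ∂μ := by
    have h : ∀ ω, (w₁ ω - w₂ ω) * (ΔY ω - μg' ω)
        = w₁ ω * (ΔY ω - μg' ω) - w₂ ω * (ΔY ω - μg' ω) := fun ω => by ring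
    simp only [h]
    exact integral_sub hint_w1 hint_w2
  have hsub2 : ∫ ω, (w₃ ω - w₄ ω) * (ΔY ω - μc' ω) ∂μ
      = (∫ ω, w₃ ω * (ΔY ω - μc' ω) ∂μ) - ∫ ω, w₄ ω * (ΔY ω - μc' ω) ∂μ := by
    have h : ∀ ω, (w₃ ω - w₄ ω) * (ΔY ω - μc' ω)
        = w₃ ω * (ΔY ω - μc' ω) - w₄ ω * (ΔY ω - μc' ω) := fun ω => by ring
    simp only [h]
    exact integral_sub hint_w3 hint_w4
  -- conditional-measure integrals
  have hcondInt : ∀ f : Ω → ℝ, ∫ ω, f ω ∂(μ[|Egs]) = p⁻¹ * ∫ ω, Egs.indicator f ω ∂μ := by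
    intro f
    simp only [ProbabilityTheory.cond]
    rw [integral_smul_measure, ← integral_indicator hmEgs, smul_eq_mul,
      ENNReal.toReal_inv, hp]
  rw [hsub1, hsub2, hT1, hT2, hT3, hT4, hcondInt, hcondInt]
  ring
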